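/- In a Nash equilibrium of a budget-aggregation game with Leontief utilities where agents' critical-alternative sets connect all alternatives in a component A' supported by agents N', the sum of the equilibrium aggregate shares over alternatives in A' equals |N'|/n. -/

import Mathlib

def IsStrategy (n m : ℕ) (d : Fin m → ℝ) : Prop :=
  (∀ x, 0 ≤ d x) ∧ ∑ x, d x = 1 / n

def IsNash (n m : ℕ) (u : Fin n → (Fin m → ℝ) → ℝ) (δ : Fin n → Fin m → ℝ) : Prop :=
  (∀ i, IsStrategy n m (δ i)) ∧
  ∀ i, ∀ d, IsStrategy n m d →
    u i ((∑ j, δ j) - δ i + d) ≤ u i (∑ j, δ j)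

noncomputable def Apos {n m : ℕ} (v : Fin n → Fin m → ℝ) (i : Fin n) : Finset (Fin m) :=
  Finset.univ.filter (fun x => 0 < v i x)

noncomputable def leontief {n m : ℕ} (v : Fin n → Fin m → ℝ)
    (h : ∀ i, (Apos v i).Nonempty) (i : Fin n) (d : Fin m → ℝ) : ℝ :=
  (Apos v i).inf' (h i) (fun x => d x / v i x)

noncomputable def critical {n m : ℕ} (v : Fin n → Fin m → ℝ)
    (h : ∀ i, (Apos v i).Nonempty) (i : Fin n) (d : Fin m → ℝ) : Finset (Fin m) :=
  (Apos v i).filter (fun x => d x / v i x = leontief v h i d)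

/-- in a Leontief Nash equilibrium, if `A'` is a connected component
of the graph on alternatives linking `x` and `y` whenever both are critical for
some agent, and `N'` is the set of agents whose contributions are supported in
`A'`, then the total equilibrium share of `A'` equals `|N'| / n`. -/
theorem leontief_component_share
    (n m : ℕ) (hn : 0 < n)
    (v : Fin n → Fin m → ℝ) (hv : ∀ i x, 0 ≤ v i x)
    (hpos : ∀ i, (Apos v i).Nonempty)
    (δ : Fin n → Fin m → ℝ)
    (hNE : IsNash n m (leontief v hpos) δ)
    (A' : Finset (Fin m))
    -- `A'` is closed under the edge relation "both critical for some agent":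
    (hclosed : ∀ x ∈ A', ∀ y : Fin m,
      (∃ i, x ∈ critical v hpos i (∑ j, δ j) ∧ y ∈ critical v hpos i (∑ j, δ j)) →
      y ∈ A')
    (N' : Finset (Fin n))
    (hN' : N' = Finset.univ.filter (fun i => ∀ x, 0 < δ i x → x ∈ A')) :
    ∑ x ∈ A', (∑ i, δ i x) = (N'.card : ℝ) / n := by
  classical
  set D : Fin m → ℝ := ∑ j, δ j with hD
  obtain ⟨hstrat, hbest⟩ := hNE
  -- Key lemma: support of each δ i is contained in the critical set.
  have key : ∀ i x, 0 < δ i x → x ∈ critical v hpos i D := by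
    intro i x hx
    by_contra hxT
    set L : ℝ := leontief v hpos i D with hL
    set T : Finset (Fin m) := critical v hpos i D with hT
    have hTne : T.Nonempty := by
      obtain ⟨y, hy, hyval⟩ := Finset.exists_mem_eq_inf' (hpos i) (fun z => D z / v i z)
      exact ⟨y, Finset.mem_filter.mpr ⟨hy, hyval.symm⟩⟩
    have hratio : ∀ z ∈ Apos v i, z ∉ T → L < D z / v i z := by
      intro z hz hzT
      have h1 : L ≤ D z / v i z := Finset.inf'_le _ hz
      rcases h1.lt_or_eq with h | h
      · exact h
      · exact absurd (Finset.mem_filter.mpr ⟨hz, h.symm⟩) hzT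
    obtain ⟨ε, hε0, hεle, hεx⟩ :
        ∃ ε : ℝ, 0 < ε ∧ ε ≤ δ i x ∧ (x ∈ Apos v i → L < (D x - ε) / v i x) := by
      by_cases hxA : x ∈ Apos v i
      · have hvx : 0 < v i x := (Finset.mem_filter.mp hxA).2
        have hgap : L < D x / v i x := hratio x hxA hxT
        have hg : 0 < (D x / v i x - L) * v i x := by
          have : 0 < D x / v i x - L := by linarith
          positivity
        refine ⟨min (δ i x) ((D x / v i x - L) * v i x / 2), lt_min hx (by linarith),
          min_le_left _ _, fun _ => ?_⟩
        have hlt : min (δ i x) ((D x / v i x - L) * v i x / 2)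
            < (D x / v i x - L) * v i x := lt_of_le_of_lt (min_le_right _ _) (by linarith)
        rw [lt_div_iff₀ hvx]
        have hDx : D x / v i x * v i x = D x := div_mul_cancel₀ _ (ne_of_gt hvx)
        nlinarith [hlt]
      · exact ⟨δ i x, hx, le_refl _, fun h => absurd h hxA⟩
    set c : ℝ := ε / T.card with hc
    have hcard : (0:ℝ) < T.card := by exact_mod_cast Finset.card_pos.mpr hTne
    have hcpos : 0 < c := div_pos hε0 hcard
    set d : Fin m → ℝ :=
      fun z => δ i z - (if z = x then ε else 0) + (if z ∈ T then c else 0) with hd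
    have hxT' : x ∉ T := hxT
    have hdstrat : IsStrategy n m d := by
      constructor
      · intro z
        by_cases hzx : z = x
        · subst hzx
          show 0 ≤ (δ i z - if z = z then ε else 0) + (if z ∈ T then c else 0)
          rw [if_pos rfl, if_neg hxT']
          linarith
        · have h0 := (hstrat i).1 z
          show 0 ≤ (δ i z - if z = x then ε else 0) + (if z ∈ T then c else 0)
          rw [if_neg hzx]
          split <;> linarith
      · have hsum := (hstrat i).2
        simp only [hd]
        rw [Finset.sum_add_distrib, Finset.sum_sub_distrib, hsum,
          Finset.sum_ite_eq' Finset.univ x (fun _ => ε), if_pos (Finset.mem_univ x)]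
        have h2 : ∑ z : Fin m, (if z ∈ T then c else 0) = T.card * c := by
          rw [Finset.sum_ite_mem, Finset.univ_inter, Finset.sum_const, nsmul_eq_mul]
        rw [h2, hc]
        field_simp
        ring
    have hle := hbest i d hdstrat
    have hnew : D - δ i + d =
        fun z => D z - (if z = x then ε else 0) + (if z ∈ T then c else 0) := by
      funext z
      simp only [Pi.add_apply, Pi.sub_apply, hd]
      ring
    have hgt : L < leontief v hpos i (D - δ i + d) := by
      rw [hnew, leontief, Finset.lt_inf'_iff]
      intro z hz
      have hvz : 0 < v i z := (Finset.mem_filter.mp hz).2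
      by_cases hzT : z ∈ T
      · have hzx : z ≠ x := fun h => hxT' (h ▸ hzT)
        have hLz : D z / v i z = L := (Finset.mem_filter.mp hzT).2
        simp only [if_neg hzx, if_pos hzT, sub_zero]
        rw [add_div, hLz]
        have : 0 < c / v i z := div_pos hcpos hvz
        linarith
      · by_cases hzx : z = x
        · subst hzx
          simpa only [if_pos rfl, ↓reduceIte, if_neg hzT, add_zero] using hεx hz
        · simp only [if_neg hzx, if_neg hzT, sub_zero, add_zero]
          exact hratio z hz hzT
    exact absurd hle (not_le.mpr hgt)
  -- Split agents: each agent is fully supported inside A' or has no mass in A'.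
  have hzero : ∀ i : Fin n, ¬ (∀ x, 0 < δ i x → x ∈ A') → ∀ x ∈ A', δ i x = 0 := by
    intro i hi x hxA
    push_neg at hi
    obtain ⟨x0, hx0, hx0A⟩ := hi
    by_contra hne
    have hpos' : 0 < δ i x := lt_of_le_of_ne ((hstrat i).1 x) (Ne.symm hne)
    exact hx0A (hclosed x hxA x0 ⟨i, key i x hpos', key i x0 hx0⟩)
  have hfull : ∀ i : Fin n, (∀ x, 0 < δ i x → x ∈ A') → ∑ x ∈ A', δ i x = 1 / n := by
    intro i hi
    rw [← (hstrat i).2]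
    refine Finset.sum_subset (Finset.subset_univ A') ?_
    intro x _ hxA
    by_contra hne
    exact hxA (hi x (lt_of_le_of_ne ((hstrat i).1 x) (Ne.symm hne)))
  have hterm : ∀ i : Fin n, ∑ x ∈ A', δ i x
      = if (∀ x, 0 < δ i x → x ∈ A') then (1:ℝ) / n else 0 := by
    intro i
    by_cases hi : ∀ x, 0 < δ i x → x ∈ A'
    · rw [if_pos hi]; exact hfull i hi
    · rw [if_neg hi]
      exact Finset.sum_eq_zero (fun x hx => hzero i hi x hx)
  rw [Finset.sum_comm, Finset.sum_congr rfl (fun i _ => hterm i), hN',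
    Finset.sum_ite, Finset.sum_const_zero, add_zero, Finset.sum_const, nsmul_eq_mul,
    mul_one_div]
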